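/- arXiv:1704.06985 — 2 statements merged into one kernel-verified Lean document; each statement's English description precedes it below -/
import Mathlib

section
/- (Value function of the switched LQ problem as a pointwise minimum of quadratics) For all k ∈ {0,...,N} and x ∈ ℝ^n, J_k^*(x) = min over P ∈ H_k of ½ xᵀ P x, where the sets H_k are defined by H_N = {Ψ} and H_k = {ρ_{i,k}(P) : P ∈ H_{k+1}, i ∈ Ω}. -/
open Matrix

/-- State trajectory of the switched system started at `x` at time `k`. -/
noncomputable def slsTraj {n nu q : ℕ}
    (A : Fin q → Matrix (Fin n) (Fin n) ℝ)
    (B : Fin q → Matrix (Fin n) (Fin nu) ℝ)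
    (σ : ℕ → Fin q) (u : ℕ → Fin nu → ℝ) (k : ℕ) (x : Fin n → ℝ) : ℕ → Fin n → ℝ
  | 0 => x
  | t + 1 => A (σ (k + t)) *ᵥ slsTraj A B σ u k x t +
      B (σ (k + t)) *ᵥ u (k + t)

/-- Cost-to-go from time `k`, state `x`, under inputs `u, σ`. -/
noncomputable def slsCostToGo {n nu q : ℕ} (N : ℕ)
    (A : Fin q → Matrix (Fin n) (Fin n) ℝ)
    (B : Fin q → Matrix (Fin n) (Fin nu) ℝ)
    (Q : ℕ → Matrix (Fin n) (Fin n) ℝ) (R : ℕ → Matrix (Fin nu) (Fin nu) ℝ)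
    (Ψ : Matrix (Fin n) (Fin n) ℝ)
    (k : ℕ) (x : Fin n → ℝ) (σ : ℕ → Fin q) (u : ℕ → Fin nu → ℝ) : ℝ :=
  (1 / 2) * (slsTraj A B σ u k x (N - k) ⬝ᵥ Ψ *ᵥ slsTraj A B σ u k x (N - k)) +
    (1 / 2) * ∑ t ∈ Finset.range (N - k),
      (slsTraj A B σ u k x t ⬝ᵥ Q (k + t) *ᵥ slsTraj A B σ u k x t +
        u (k + t) ⬝ᵥ R (k + t) *ᵥ u (k + t))

/-- Value function (optimal cost-to-go) of the switched LQ problem. -/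
noncomputable def slsValue {n nu q : ℕ} (N : ℕ)
    (A : Fin q → Matrix (Fin n) (Fin n) ℝ)
    (B : Fin q → Matrix (Fin n) (Fin nu) ℝ)
    (Q : ℕ → Matrix (Fin n) (Fin n) ℝ) (R : ℕ → Matrix (Fin nu) (Fin nu) ℝ)
    (Ψ : Matrix (Fin n) (Fin n) ℝ)
    (k : ℕ) (x : Fin n → ℝ) : ℝ :=
  sInf {c : ℝ | ∃ (σ : ℕ → Fin q) (u : ℕ → Fin nu → ℝ),
    c = slsCostToGo N A B Q R Ψ k x σ u}

/-- Riccati map of mode `i` at time `k`. -/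
noncomputable def riccatiMap {n nu q : ℕ}
    (A : Fin q → Matrix (Fin n) (Fin n) ℝ)
    (B : Fin q → Matrix (Fin n) (Fin nu) ℝ)
    (Q : ℕ → Matrix (Fin n) (Fin n) ℝ) (R : ℕ → Matrix (Fin nu) (Fin nu) ℝ)
    (i : Fin q) (k : ℕ) (P : Matrix (Fin n) (Fin n) ℝ) : Matrix (Fin n) (Fin n) ℝ :=
  Q k + (A i)ᵀ * P * A i -
    (A i)ᵀ * P * B i * (R k + (B i)ᵀ * P * B i)⁻¹ * (B i)ᵀ * P * A i

/-- `slsH N ... j` is the set `H_{N-j}`: `slsH _ 0 = {Ψ}` and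
`H_k = {ρ_{i,k}(P) : P ∈ H_{k+1}, i ∈ Ω}`. -/
noncomputable def slsH {n nu q : ℕ} (N : ℕ)
    (A : Fin q → Matrix (Fin n) (Fin n) ℝ)
    (B : Fin q → Matrix (Fin n) (Fin nu) ℝ)
    (Q : ℕ → Matrix (Fin n) (Fin n) ℝ) (R : ℕ → Matrix (Fin nu) (Fin nu) ℝ)
    (Ψ : Matrix (Fin n) (Fin n) ℝ) : ℕ → Set (Matrix (Fin n) (Fin n) ℝ)
  | 0 => {Ψ}
  | j + 1 => {M | ∃ P ∈ slsH N A B Q R Ψ j, ∃ i : Fin q,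
      M = riccatiMap A B Q R i (N - (j + 1)) P}

/-! ### Auxiliary lemmas -/

lemma sls_mdp {m n : Type*} [Fintype m] [Fintype n] (M : Matrix m n ℝ) (x : n → ℝ) (y : m → ℝ) :
    (M *ᵥ x) ⬝ᵥ y = x ⬝ᵥ (Mᵀ *ᵥ y) := by
  rw [dotProduct_comm, dotProduct_mulVec, mulVec_transpose, dotProduct_comm]

lemma sls_quadKey {n nu : ℕ} (Am : Matrix (Fin n) (Fin n) ℝ) (Bm : Matrix (Fin n) (Fin nu) ℝ)
    (Qm : Matrix (Fin n) (Fin n) ℝ) (Rm : Matrix (Fin nu) (Fin nu) ℝ)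
    (P : Matrix (Fin n) (Fin n) ℝ) (hP : P.PosSemidef) (hR : Rm.PosDef)
    (x : Fin n → ℝ) (u : Fin nu → ℝ) :
    x ⬝ᵥ Qm *ᵥ x + u ⬝ᵥ Rm *ᵥ u + (Am *ᵥ x + Bm *ᵥ u) ⬝ᵥ P *ᵥ (Am *ᵥ x + Bm *ᵥ u)
      = x ⬝ᵥ (Qm + Amᵀ * P * Am - Amᵀ * P * Bm * (Rm + Bmᵀ * P * Bm)⁻¹ * Bmᵀ * P * Am) *ᵥ x
        + (u + (Rm + Bmᵀ * P * Bm)⁻¹ *ᵥ ((Bmᵀ * P * Am) *ᵥ x)) ⬝ᵥ (Rm + Bmᵀ * P * Bm) *ᵥ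
            (u + (Rm + Bmᵀ * P * Bm)⁻¹ *ᵥ ((Bmᵀ * P * Am) *ᵥ x)) := by
  set S := Rm + Bmᵀ * P * Bm with hSdef
  have hS : S.PosDef := hR.add_posSemidef (hP.conjTranspose_mul_mul_same Bm)
  have hSu : IsUnit S.det := isUnit_iff_isUnit_det _ |>.1 hS.isUnit
  have h1 : S * S⁻¹ = 1 := Matrix.mul_nonsing_inv _ hSu
  have h2 : S⁻¹ * S = 1 := Matrix.nonsing_inv_mul _ hSu
  have hSsym : Sᵀ = S := hS.isHermitian
  have hPsym : Pᵀ = P := hP.isHermitian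
  have hSinvsym : (S⁻¹)ᵀ = S⁻¹ := by rw [Matrix.transpose_nonsing_inv, hSsym]
  simp only [mulVec_add, Matrix.add_mulVec, Matrix.sub_mulVec, dotProduct_add, add_dotProduct,
    dotProduct_sub, sls_mdp, mulVec_mulVec, transpose_mul, transpose_transpose, hSsym, hPsym,
    hSinvsym, Matrix.mul_assoc]
  simp only [← Matrix.mul_assoc, h1, h2, Matrix.one_mul, Matrix.mul_one]
  simp only [hSdef, Matrix.add_mulVec, dotProduct_add, add_dotProduct, ← Matrix.mul_assoc]
  ring

section
variable {n nu q : ℕ} (N : ℕ) (A : Fin q → Matrix (Fin n) (Fin n) ℝ)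
    (B : Fin q → Matrix (Fin n) (Fin nu) ℝ)
    (Q : ℕ → Matrix (Fin n) (Fin n) ℝ) (R : ℕ → Matrix (Fin nu) (Fin nu) ℝ)
    (Ψ : Matrix (Fin n) (Fin n) ℝ)
    (σ σ' : ℕ → Fin q) (u u' : ℕ → Fin nu → ℝ) (k : ℕ) (x : Fin n → ℝ)

lemma slsTraj_zero : slsTraj A B σ u k x 0 = x := rfl

lemma slsTraj_succ (t : ℕ) : slsTraj A B σ u k x (t + 1) =
    A (σ (k + t)) *ᵥ slsTraj A B σ u k x t + B (σ (k + t)) *ᵥ u (k + t) := rfl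

lemma slsTraj_shift (t : ℕ) :
    slsTraj A B σ u (k + 1) (A (σ k) *ᵥ x + B (σ k) *ᵥ u k) t
      = slsTraj A B σ u k x (t + 1) := by
  induction t with
  | zero => simp [slsTraj_zero, slsTraj_succ]
  | succ t ih =>
    rw [slsTraj_succ, slsTraj_succ, ih]
    have h : k + 1 + t = k + (t + 1) := by omega
    rw [h]

lemma slsTraj_congr (h : ∀ t ≥ k, σ t = σ' t ∧ u t = u' t) (t : ℕ) :
    slsTraj A B σ u k x t = slsTraj A B σ' u' k x t := by
  induction t with
  | zero => rfl
  | succ t ih =>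
    rw [slsTraj_succ, slsTraj_succ, ih, (h (k+t) (by omega)).1, (h (k+t) (by omega)).2]

lemma slsCost_last (hk : k = N) :
    slsCostToGo N A B Q R Ψ k x σ u = (1/2) * (x ⬝ᵥ Ψ *ᵥ x) := by
  subst hk
  simp [slsCostToGo, slsTraj_zero]

lemma slsCost_congr (h : ∀ t ≥ k, σ t = σ' t ∧ u t = u' t) :
    slsCostToGo N A B Q R Ψ k x σ u = slsCostToGo N A B Q R Ψ k x σ' u' := by
  unfold slsCostToGo
  rw [slsTraj_congr A B σ σ' u u' k x h]
  congr 2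
  refine Finset.sum_congr rfl fun t _ => ?_
  rw [slsTraj_congr A B σ σ' u u' k x h, (h (k+t) (by omega)).2]

lemma slsCost_step (hk : k < N) :
    slsCostToGo N A B Q R Ψ k x σ u
      = (1/2) * (x ⬝ᵥ Q k *ᵥ x + u k ⬝ᵥ R k *ᵥ u k)
        + slsCostToGo N A B Q R Ψ (k + 1) (A (σ k) *ᵥ x + B (σ k) *ᵥ u k) σ u := by
  unfold slsCostToGo
  have hm : N - k = (N - (k + 1)) + 1 := by omega
  rw [hm, Finset.sum_range_succ']
  rw [slsTraj_zero]
  simp only [Nat.add_zero]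
  rw [← slsTraj_shift A B σ u k x (N - (k+1))]
  have hre : ∀ t, slsTraj A B σ u k x (t + 1)
      = slsTraj A B σ u (k + 1) (A (σ k) *ᵥ x + B (σ k) *ᵥ u k) t :=
    fun t => (slsTraj_shift A B σ u k x t).symm
  have hsum : ∑ t ∈ Finset.range (N - (k+1)),
      (slsTraj A B σ u k x (t + 1) ⬝ᵥ Q (k + (t + 1)) *ᵥ slsTraj A B σ u k x (t + 1) +
        u (k + (t + 1)) ⬝ᵥ R (k + (t + 1)) *ᵥ u (k + (t + 1)))
      = ∑ t ∈ Finset.range (N - (k+1)),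
      (slsTraj A B σ u (k+1) (A (σ k) *ᵥ x + B (σ k) *ᵥ u k) t ⬝ᵥ Q ((k+1) + t) *ᵥ
          slsTraj A B σ u (k+1) (A (σ k) *ᵥ x + B (σ k) *ᵥ u k) t +
        u ((k+1) + t) ⬝ᵥ R ((k+1) + t) *ᵥ u ((k+1) + t)) := by
    refine Finset.sum_congr rfl fun t _ => ?_
    rw [hre t]
    have : k + (t + 1) = (k + 1) + t := by omega
    rw [this]
  rw [hsum]
  ring

lemma sls_quadKeyOpt (i : Fin q) (P : Matrix (Fin n) (Fin n) ℝ)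
    (hP : P.PosSemidef) (hRk : (R k).PosDef) :
    ∀ v : Fin nu → ℝ,
      v = -((R k + (B i)ᵀ * P * B i)⁻¹ *ᵥ (((B i)ᵀ * P * (A i)) *ᵥ x)) →
      x ⬝ᵥ Q k *ᵥ x + v ⬝ᵥ R k *ᵥ v +
        (A i *ᵥ x + B i *ᵥ v) ⬝ᵥ P *ᵥ (A i *ᵥ x + B i *ᵥ v)
        = x ⬝ᵥ (riccatiMap A B Q R i k P) *ᵥ x := by
  intro v hv
  have h := sls_quadKey (A i) (B i) (Q k) (R k) P hP hRk x v
  rw [hv] at h ⊢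
  simp only [neg_add_cancel, zero_dotProduct] at h
  rw [h, add_zero]
  rfl

lemma sls_riccati_psd (i : Fin q) (P : Matrix (Fin n) (Fin n) ℝ)
    (hQk : (Q k).PosSemidef) (hP : P.PosSemidef) (hRk : (R k).PosDef) :
    (riccatiMap A B Q R i k P).PosSemidef := by
  set S := R k + (B i)ᵀ * P * (B i) with hSdef
  have hS : S.PosDef := hRk.add_posSemidef (hP.conjTranspose_mul_mul_same (B i))
  have hSsym : Sᵀ = S := hS.isHermitian
  have hSinvsym : (S⁻¹)ᵀ = S⁻¹ := by rw [Matrix.transpose_nonsing_inv, hSsym]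
  have hPsym : Pᵀ = P := hP.isHermitian
  have hQsym : (Q k)ᵀ = Q k := hQk.isHermitian
  refine .of_dotProduct_mulVec_nonneg (show (riccatiMap A B Q R i k P)ᵀ = riccatiMap A B Q R i k P from ?_) ?_
  · unfold riccatiMap
    rw [← hSdef]
    simp only [transpose_sub, transpose_add, transpose_mul, transpose_transpose, hSinvsym,
      hPsym, hQsym, Matrix.mul_assoc]
  · intro y
    have hx : (star y : Fin n → ℝ) = y := by funext j; simp
    rw [hx]
    set v : Fin nu → ℝ := -((R k + (B i)ᵀ * P * B i)⁻¹ *ᵥ (((B i)ᵀ * P * (A i)) *ᵥ y))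
      with hv
    have h := sls_quadKeyOpt A B Q R k y i P hP hRk v hv
    rw [← h]
    have h1 : 0 ≤ y ⬝ᵥ Q k *ᵥ y := by simpa using hQk.dotProduct_mulVec_nonneg y
    have h2 : 0 ≤ v ⬝ᵥ R k *ᵥ v := by simpa using hRk.posSemidef.dotProduct_mulVec_nonneg v
    have h3 : 0 ≤ (A i *ᵥ y + B i *ᵥ v) ⬝ᵥ P *ᵥ (A i *ᵥ y + B i *ᵥ v) := by
      simpa using hP.dotProduct_mulVec_nonneg (A i *ᵥ y + B i *ᵥ v)
    linarith

variable (hQ : ∀ k, (Q k).PosSemidef) (hΨ : Ψ.PosSemidef) (hR : ∀ k, (R k).PosDef)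

include hQ hΨ hR in
lemma slsH_psd : ∀ j, ∀ P ∈ slsH N A B Q R Ψ j, P.PosSemidef := by
  intro j
  induction j with
  | zero => intro P hP; rw [show P = Ψ from hP]; exact hΨ
  | succ j ih =>
    rintro P ⟨P', hP', i, rfl⟩
    exact sls_riccati_psd A B Q R _ i P' (hQ _) (ih P' hP') (hR _)

lemma slsH_nonempty (hq : 0 < q) : ∀ j, (slsH N A B Q R Ψ j).Nonempty := by
  intro j
  induction j with
  | zero => exact ⟨Ψ, rfl⟩
  | succ j ih =>
    obtain ⟨P, hP⟩ := ih
    exact ⟨riccatiMap A B Q R ⟨0, hq⟩ (N - (j+1)) P, P, hP, ⟨0, hq⟩, rfl⟩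

include hQ hΨ hR in
lemma sls_lowerBound : ∀ j, j ≤ N → ∀ (x : Fin n → ℝ) (σ : ℕ → Fin q) (u : ℕ → Fin nu → ℝ),
    ∃ P ∈ slsH N A B Q R Ψ j,
      (1/2) * (x ⬝ᵥ P *ᵥ x) ≤ slsCostToGo N A B Q R Ψ (N - j) x σ u := by
  intro j
  induction j with
  | zero =>
    intro _ x σ u
    refine ⟨Ψ, rfl, ?_⟩
    rw [slsCost_last N A B Q R Ψ σ u (N - 0) x (by omega)]
  | succ j ih =>
    intro hj x σ u
    have hkN : N - (j + 1) < N := by omega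
    have hk1 : N - (j + 1) + 1 = N - j := by omega
    set k := N - (j + 1) with hk
    set x' := A (σ k) *ᵥ x + B (σ k) *ᵥ u k with hx'
    obtain ⟨P', hP'mem, hP'le⟩ := ih (by omega) x' σ u
    have hP'psd : P'.PosSemidef := slsH_psd N A B Q R Ψ hQ hΨ hR j P' hP'mem
    refine ⟨riccatiMap A B Q R (σ k) k P', ⟨P', hP'mem, σ k, rfl⟩, ?_⟩
    rw [slsCost_step N A B Q R Ψ σ u k x hkN]
    rw [← hk1] at hP'le
    have hkey := sls_quadKey (A (σ k)) (B (σ k)) (Q k) (R k) P' hP'psd (hR k) x (u k)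
    have hSpsd : (R k + (B (σ k))ᵀ * P' * B (σ k)).PosDef :=
      (hR k).add_posSemidef (hP'psd.conjTranspose_mul_mul_same (B (σ k)))
    set w := u k + (R k + (B (σ k))ᵀ * P' * B (σ k))⁻¹ *ᵥ (((B (σ k))ᵀ * P' * A (σ k)) *ᵥ x)
    have hvS : 0 ≤ w ⬝ᵥ (R k + (B (σ k))ᵀ * P' * B (σ k)) *ᵥ w := by
      simpa using hSpsd.posSemidef.dotProduct_mulVec_nonneg w
    have hrm : riccatiMap A B Q R (σ k) k P'
        = Q k + (A (σ k))ᵀ * P' * A (σ k) -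
          (A (σ k))ᵀ * P' * B (σ k) * (R k + (B (σ k))ᵀ * P' * B (σ k))⁻¹ *
            (B (σ k))ᵀ * P' * A (σ k) := rfl
    rw [hrm]
    linarith

include hQ hΨ hR in
lemma sls_achieve (hq : 0 < q) : ∀ j, j ≤ N → ∀ (x : Fin n → ℝ), ∀ P ∈ slsH N A B Q R Ψ j,
    ∃ (σ : ℕ → Fin q) (u : ℕ → Fin nu → ℝ),
      slsCostToGo N A B Q R Ψ (N - j) x σ u = (1/2) * (x ⬝ᵥ P *ᵥ x) := by
  intro j
  induction j with
  | zero =>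
    intro _ x P hP
    refine ⟨fun _ => ⟨0, hq⟩, fun _ => 0, ?_⟩
    rw [show P = Ψ from hP]
    exact slsCost_last N A B Q R Ψ _ _ (N - 0) x (by omega)
  | succ j ih =>
    intro hj x P hPmem
    obtain ⟨P', hP', i, rfl⟩ := hPmem
    have hP'psd : P'.PosSemidef := slsH_psd N A B Q R Ψ hQ hΨ hR j P' hP'
    have hkN : N - (j + 1) < N := by omega
    have hk1 : N - (j + 1) + 1 = N - j := by omega
    set k := N - (j + 1) with hk
    set u₀ : Fin nu → ℝ :=
      -((R k + (B i)ᵀ * P' * B i)⁻¹ *ᵥ (((B i)ᵀ * P' * (A i)) *ᵥ x)) with hu₀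
    set x' := A i *ᵥ x + B i *ᵥ u₀ with hx'
    obtain ⟨σ', u', hach⟩ := ih (by omega) x' P' hP'
    refine ⟨Function.update σ' k i, Function.update u' k u₀, ?_⟩
    rw [slsCost_step N A B Q R Ψ _ _ k x hkN]
    rw [Function.update_self, Function.update_self]
    have hcongr : slsCostToGo N A B Q R Ψ (k + 1) x' (Function.update σ' k i)
        (Function.update u' k u₀) = slsCostToGo N A B Q R Ψ (k + 1) x' σ' u' := by
      refine slsCost_congr N A B Q R Ψ _ σ' _ u' (k + 1) x' fun t ht => ?_
      constructor <;> exact Function.update_of_ne (by omega) _ _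
    rw [← hx', hcongr, hk1, hach]
    have hkey := sls_quadKeyOpt A B Q R k x i P' hP'psd (hR k) u₀ hu₀
    rw [← hx'] at hkey
    linarith
end

theorem stmt_9 (n nu q N : ℕ) (hq : 0 < q)
    (A : Fin q → Matrix (Fin n) (Fin n) ℝ)
    (B : Fin q → Matrix (Fin n) (Fin nu) ℝ)
    (Q : ℕ → Matrix (Fin n) (Fin n) ℝ) (R : ℕ → Matrix (Fin nu) (Fin nu) ℝ)
    (Ψ : Matrix (Fin n) (Fin n) ℝ)
    (hQ : ∀ k, (Q k).PosSemidef) (hΨ : Ψ.PosSemidef) (hR : ∀ k, (R k).PosDef) :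
    ∀ k ≤ N, ∀ x : Fin n → ℝ,
      slsValue N A B Q R Ψ k x =
        sInf {c : ℝ | ∃ P ∈ slsH N A B Q R Ψ (N - k),
          c = (1 / 2) * (x ⬝ᵥ P *ᵥ x)} := by
  intro k hkN x
  set S2 := {c : ℝ | ∃ P ∈ slsH N A B Q R Ψ (N - k), c = (1 / 2) * (x ⬝ᵥ P *ᵥ x)} with hS2
  set S1 := {c : ℝ | ∃ (σ : ℕ → Fin q) (u : ℕ → Fin nu → ℝ),
    c = slsCostToGo N A B Q R Ψ k x σ u} with hS1
  have hNk : N - (N - k) = k := by omega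
  have hsub : S2 ⊆ S1 := by
    rintro c ⟨P, hP, rfl⟩
    obtain ⟨σ, u, hσu⟩ := sls_achieve N A B Q R Ψ hQ hΨ hR hq (N - k) (by omega) x P hP
    rw [hNk] at hσu
    exact ⟨σ, u, hσu.symm⟩
  have hlb : ∀ c ∈ S1, ∃ c' ∈ S2, c' ≤ c := by
    rintro c ⟨σ, u, rfl⟩
    obtain ⟨P, hP, hle⟩ := sls_lowerBound N A B Q R Ψ hQ hΨ hR (N - k) (by omega) x σ u
    rw [hNk] at hle
    exact ⟨(1/2) * (x ⬝ᵥ P *ᵥ x), ⟨P, hP, rfl⟩, hle⟩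
  have hnn2 : ∀ c ∈ S2, 0 ≤ c := by
    rintro c ⟨P, hP, rfl⟩
    have := slsH_psd N A B Q R Ψ hQ hΨ hR (N - k) P hP
    have h0 : 0 ≤ x ⬝ᵥ P *ᵥ x := by simpa using this.dotProduct_mulVec_nonneg x
    linarith
  have hbdd2 : BddBelow S2 := ⟨0, fun c hc => hnn2 c hc⟩
  have hbdd1 : BddBelow S1 := by
    refine ⟨0, fun c hc => ?_⟩
    obtain ⟨c', hc', hle⟩ := hlb c hc
    exact le_trans (hnn2 c' hc') hle
  have hne2 : S2.Nonempty := by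
    obtain ⟨P, hP⟩ := slsH_nonempty N A B Q R Ψ hq (N - k)
    exact ⟨(1/2) * (x ⬝ᵥ P *ᵥ x), P, hP, rfl⟩
  have hne1 : S1.Nonempty := hne2.mono hsub
  show sInf S1 = sInf S2
  apply le_antisymm
  · exact le_csInf hne2 fun c hc => csInf_le hbdd1 (hsub hc)
  · refine le_csInf hne1 fun c hc => ?_
    obtain ⟨c', hc', hle⟩ := hlb c hc
    exact le_trans (csInf_le hbdd2 hc') hle
end

section
/- For any symmetric positive semidefinite P and positive definite R, and any x, the quadratic xᵀρ(P)x is monotone in P: if P₁ ⪯ P₂ (i.e., P₂ − P₁ is PSD), then ρ(P₁) ⪯ ρ(P₂), where ρ(P) = Q + AᵀPA − AᵀPB(R + BᵀPB)^{−1}BᵀPA. -/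
open Matrix

theorem stmt_14 (n nu : ℕ)
    (A : Matrix (Fin n) (Fin n) ℝ) (B : Matrix (Fin n) (Fin nu) ℝ)
    (Q : Matrix (Fin n) (Fin n) ℝ) (R : Matrix (Fin nu) (Fin nu) ℝ)
    (hQ : Q.PosSemidef) (hR : R.PosDef)
    (P₁ P₂ : Matrix (Fin n) (Fin n) ℝ)
    (hP₁ : P₁.PosSemidef) (hP₂ : P₂.PosSemidef) (hle : (P₂ - P₁).PosSemidef) :
    ((Q + Aᵀ * P₂ * A - Aᵀ * P₂ * B * (R + Bᵀ * P₂ * B)⁻¹ * Bᵀ * P₂ * A) -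
     (Q + Aᵀ * P₁ * A - Aᵀ * P₁ * B * (R + Bᵀ * P₁ * B)⁻¹ * Bᵀ * P₁ * A)).PosSemidef := by
  have hctr : ∀ {a b : ℕ} (M : Matrix (Fin a) (Fin b) ℝ), Mᴴ = Mᵀ :=
    fun M => conjTranspose_eq_transpose_of_trivial M
  have hP1s : P₁ᵀ = P₁ := by rw [← hctr]; exact hP₁.1
  have hP2s : P₂ᵀ = P₂ := by rw [← hctr]; exact hP₂.1
  have hRs : Rᵀ = R := by rw [← hctr]; exact hR.1
  have hBPB₁ : (Bᵀ * P₁ * B).PosSemidef := by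
    have := hP₁.conjTranspose_mul_mul_same B; rwa [hctr] at this
  have hBPB₂ : (Bᵀ * P₂ * B).PosSemidef := by
    have := hP₂.conjTranspose_mul_mul_same B; rwa [hctr] at this
  have hS₁ : (R + Bᵀ * P₁ * B).PosDef := hR.add_posSemidef hBPB₁
  have hS₂ : (R + Bᵀ * P₂ * B).PosDef := hR.add_posSemidef hBPB₂
  set S1 := R + Bᵀ * P₁ * B with hS1def
  set S2 := R + Bᵀ * P₂ * B with hS2def
  have hd₁ : IsUnit S1.det := hS₁.det_pos.ne'.isUnit
  have hd₂ : IsUnit S2.det := hS₂.det_pos.ne'.isUnit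
  have hS1s : S1ᵀ = S1 := by rw [← hctr]; exact hS₁.1
  have hS2s : S2ᵀ = S2 := by rw [← hctr]; exact hS₂.1
  set K1 := S1⁻¹ * (Bᵀ * (P₁ * A)) with hK1def
  set K2 := S2⁻¹ * (Bᵀ * (P₂ * A)) with hK2def
  have e1 : S1 * K1 = Bᵀ * (P₁ * A) := by
    rw [hK1def, ← Matrix.mul_assoc, Matrix.mul_nonsing_inv _ hd₁, Matrix.one_mul]
  have e2 : S2 * K2 = Bᵀ * (P₂ * A) := by
    rw [hK2def, ← Matrix.mul_assoc, Matrix.mul_nonsing_inv _ hd₂, Matrix.one_mul]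
  have e1T : K1ᵀ * S1 = Aᵀ * (P₁ * B) := by
    have := congrArg Matrix.transpose e1
    simp only [Matrix.transpose_mul, Matrix.transpose_transpose, hS1s, hP1s] at this
    rw [this, Matrix.mul_assoc]
  have e2T : K2ᵀ * S2 = Aᵀ * (P₂ * B) := by
    have := congrArg Matrix.transpose e2
    simp only [Matrix.transpose_mul, Matrix.transpose_transpose, hS2s, hP2s] at this
    rw [this, Matrix.mul_assoc]
  have T1 : Aᵀ * P₁ * B * S1⁻¹ * Bᵀ * P₁ * A = K1ᵀ * (Bᵀ * (P₁ * A)) := by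
    have h1 : Aᵀ * P₁ * B = K1ᵀ * S1 := by rw [e1T, Matrix.mul_assoc]
    rw [h1, Matrix.mul_nonsing_inv_cancel_right _ _ hd₁]
    simp only [Matrix.mul_assoc]
  have T2 : Aᵀ * P₂ * B * S2⁻¹ * Bᵀ * P₂ * A = K2ᵀ * (Bᵀ * (P₂ * A)) := by
    have h1 : Aᵀ * P₂ * B = K2ᵀ * S2 := by rw [e2T, Matrix.mul_assoc]
    rw [h1, Matrix.mul_nonsing_inv_cancel_right _ _ hd₂]
    simp only [Matrix.mul_assoc]
  have v1 : Bᵀ * (P₁ * A) = R * K1 + Bᵀ * (P₁ * (B * K1)) := by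
    rw [← e1, hS1def]
    simp only [Matrix.add_mul, Matrix.mul_assoc]
  have v2 : Bᵀ * (P₂ * A) = R * K2 + Bᵀ * (P₂ * (B * K2)) := by
    rw [← e2, hS2def]
    simp only [Matrix.add_mul, Matrix.mul_assoc]
  have u1 : Aᵀ * (P₁ * (B * K2)) = K1ᵀ * (R * K2) + K1ᵀ * (Bᵀ * (P₁ * (B * K2))) := by
    have h1 : Aᵀ * (P₁ * (B * K2)) = (Aᵀ * (P₁ * B)) * K2 := by
      simp only [Matrix.mul_assoc]
    rw [h1, ← e1T, hS1def]
    simp only [Matrix.add_mul, Matrix.mul_add, Matrix.mul_assoc]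
  have u2 : Aᵀ * (P₂ * (B * K2)) = K2ᵀ * (R * K2) + K2ᵀ * (Bᵀ * (P₂ * (B * K2))) := by
    have h1 : Aᵀ * (P₂ * (B * K2)) = (Aᵀ * (P₂ * B)) * K2 := by
      simp only [Matrix.mul_assoc]
    rw [h1, ← e2T, hS2def]
    simp only [Matrix.add_mul, Matrix.mul_add, Matrix.mul_assoc]
  have key : ((Q + Aᵀ * P₂ * A - Aᵀ * P₂ * B * S2⁻¹ * Bᵀ * P₂ * A) -
      (Q + Aᵀ * P₁ * A - Aᵀ * P₁ * B * S1⁻¹ * Bᵀ * P₁ * A))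
      = (A - B * K2)ᵀ * (P₂ - P₁) * (A - B * K2) + (K2 - K1)ᵀ * S1 * (K2 - K1) := by
    rw [T1, T2, hS1def]
    simp only [Matrix.transpose_sub, Matrix.transpose_mul, Matrix.transpose_transpose,
      hP1s, hP2s, Matrix.sub_mul, Matrix.mul_sub, Matrix.add_mul, Matrix.mul_add,
      Matrix.mul_assoc]
    simp only [v1, v2, u1, u2, Matrix.mul_add]
    abel
  rw [key]
  have h1 : ((A - B * K2)ᵀ * (P₂ - P₁) * (A - B * K2)).PosSemidef := by
    have := hle.conjTranspose_mul_mul_same (A - B * K2); rwa [hctr] at this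
  have h2 : ((K2 - K1)ᵀ * S1 * (K2 - K1)).PosSemidef := by
    have := hS₁.posSemidef.conjTranspose_mul_mul_same (K2 - K1); rwa [hctr] at this
  exact h1.add h2
end
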